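/- Let a = a_1⋯a_k ∈ {0,1}^k and b = b_1⋯b_j ∈ {0,1}^j be two finite binary words. Then N(a) < N(b) if and only if X(a) < X(b). (Equivalently, the map g(x,y) = (x−y)/√5 from the set of pairs (X(a),Y(a)) to the natural numbers is order preserving.) -/
import Mathlib


open Real Finset

noncomputable section

/-- The golden mean φ = (1+√5)/2. -/
def phi : ℝ := (1 + Real.sqrt 5) / 2

/-- ψ = (1−√5)/2 = −1/φ. -/
def psi : ℝ := (1 - Real.sqrt 5) / 2

/-- A word `a : Fin k → ℕ` is binary if all its letters are 0 or 1. -/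
def IsBin {k : ℕ} (a : Fin k → ℕ) : Prop := ∀ i, a i ≤ 1

/-- N(a) = ∑_{i=1}^k a_i F_{k+2−i}  (here `i : Fin k` corresponds to `i+1`). -/
def Nw {k : ℕ} (a : Fin k → ℕ) : ℕ := ∑ i : Fin k, a i * Nat.fib (k + 1 - (i : ℕ))

/-- X(a) = ∑_{i=1}^k a_i φ^{k+2−i}. -/
def Xw {k : ℕ} (a : Fin k → ℕ) : ℝ := ∑ i : Fin k, (a i : ℝ) * phi ^ (k + 1 - (i : ℕ))

/-- Y(a) = ∑_{i=1}^k a_i ψ^{k+2−i}. -/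
def Yw {k : ℕ} (a : Fin k → ℕ) : ℝ := ∑ i : Fin k, (a i : ℝ) * psi ^ (k + 1 - (i : ℕ))

/-- auxiliary: M(a) = ∑ a_i F_{k−i}. -/
def Mw {k : ℕ} (a : Fin k → ℕ) : ℕ := ∑ i : Fin k, a i * Nat.fib (k - (i : ℕ))

lemma sqrt5_sq : Real.sqrt 5 ^ 2 = 5 := Real.sq_sqrt (by norm_num)

lemma sqrt5_gt_two : (2 : ℝ) < Real.sqrt 5 := by
  nlinarith [sqrt5_sq, Real.sqrt_nonneg 5]

lemma sqrt5_lt_three : Real.sqrt 5 < 3 := by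
  nlinarith [sqrt5_sq, Real.sqrt_nonneg 5]

lemma psi_neg : psi < 0 := by unfold psi; linarith [sqrt5_gt_two]

lemma psi_sq : psi ^ 2 = psi + 1 := by
  unfold psi; nlinarith [sqrt5_sq]

lemma phi_sq : phi ^ 2 = phi + 1 := by
  unfold phi; nlinarith [sqrt5_sq]

lemma phi_sub_psi : phi - psi = Real.sqrt 5 := by
  unfold phi psi; ring

lemma phi_pow (n : ℕ) : phi ^ (n + 1) = (Nat.fib (n + 1) : ℝ) * phi + Nat.fib n := by
  induction n with
  | zero => simp
  | succ m ih =>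
      have : phi ^ (m + 2) = phi ^ (m + 1) * phi := by ring
      rw [this, ih, Nat.fib_add_two]
      push_cast
      nlinarith [phi_sq]

lemma psi_pow (n : ℕ) : psi ^ (n + 1) = (Nat.fib (n + 1) : ℝ) * psi + Nat.fib n := by
  induction n with
  | zero => simp
  | succ m ih =>
      have : psi ^ (m + 2) = psi ^ (m + 1) * psi := by ring
      rw [this, ih, Nat.fib_add_two]
      push_cast
      nlinarith [psi_sq]

lemma Xw_eq {k : ℕ} (a : Fin k → ℕ) : Xw a = (Nw a : ℝ) * phi + (Mw a : ℝ) := by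
  unfold Xw Nw Mw
  push_cast
  rw [Finset.sum_mul, ← Finset.sum_add_distrib]
  apply Finset.sum_congr rfl
  intro i _
  have hi : (i : ℕ) < k := i.isLt
  have h1 : k + 1 - (i : ℕ) = (k - (i : ℕ)) + 1 := by omega
  rw [h1, phi_pow]
  have h2 : k - (i : ℕ) + 1 = k + 1 - (i : ℕ) := by omega
  rw [h2, h1]
  ring

lemma Yw_eq {k : ℕ} (a : Fin k → ℕ) : Yw a = (Nw a : ℝ) * psi + (Mw a : ℝ) := by
  unfold Yw Nw Mw
  push_cast
  rw [Finset.sum_mul, ← Finset.sum_add_distrib]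
  apply Finset.sum_congr rfl
  intro i _
  have hi : (i : ℕ) < k := i.isLt
  have h1 : k + 1 - (i : ℕ) = (k - (i : ℕ)) + 1 := by omega
  rw [h1, psi_pow]
  have h2 : k - (i : ℕ) + 1 = k + 1 - (i : ℕ) := by omega
  rw [h2, h1]
  ring

lemma Xw_sub_Yw {k : ℕ} (a : Fin k → ℕ) :
    Xw a - Yw a = (Nw a : ℝ) * Real.sqrt 5 := by
  rw [Xw_eq, Yw_eq, ← phi_sub_psi]; ring

/-- The crucial bounds on Y for binary words: −ψ² < Y(a) < −ψ. -/
lemma Yw_bounds : ∀ {k : ℕ} (a : Fin k → ℕ), IsBin a →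
    -psi ^ 2 < Yw a ∧ Yw a < -psi := by
  intro k
  induction k with
  | zero =>
      intro a _
      have h0 : Yw a = 0 := by unfold Yw; simp
      rw [h0]
      constructor <;> nlinarith [psi_neg, psi_sq]
  | succ m ih =>
      intro a ha
      have hsplit : Yw a = (a (Fin.last m) : ℝ) * psi ^ 2
          + psi * Yw (a ∘ Fin.castSucc) := by
        unfold Yw
        have hlast : ((Fin.last m : Fin (m+1)) : ℕ) = m := Fin.val_last m
        rw [Fin.sum_univ_castSucc, Finset.mul_sum, add_comm]
        congr 1
        · rw [hlast]
          have h2 : m + 1 + 1 - m = 2 := by omega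
          rw [h2]
        · apply Finset.sum_congr rfl
          intro i _
          have hi : (i : ℕ) < m := i.isLt
          simp only [Function.comp, Fin.coe_castSucc]
          have h1 : m + 1 + 1 - (i : ℕ) = (m + 1 - (i : ℕ)) + 1 := by omega
          rw [h1]
          ring
      have ha' : IsBin (a ∘ Fin.castSucc) := fun i => ha _
      obtain ⟨h1, h2⟩ := ih (a ∘ Fin.castSucc) ha'
      have hc0 : (0 : ℝ) ≤ (a (Fin.last m) : ℝ) := Nat.cast_nonneg _
      have hc1 : (a (Fin.last m) : ℝ) ≤ 1 := by
        exact_mod_cast ha (Fin.last m)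
      constructor
      · rw [hsplit]
        nlinarith [psi_neg, psi_sq]
      · rw [hsplit]
        nlinarith [psi_neg, psi_sq]

lemma key_lt {k j : ℕ} (a : Fin k → ℕ) (b : Fin j → ℕ)
    (ha : IsBin a) (hb : IsBin b) (h : Nw a < Nw b) : Xw a < Xw b := by
  obtain ⟨ha1, ha2⟩ := Yw_bounds a ha
  obtain ⟨hb1, hb2⟩ := Yw_bounds b hb
  have hxa := Xw_sub_Yw a
  have hxb := Xw_sub_Yw b
  have hN : (Nw a : ℝ) + 1 ≤ (Nw b : ℝ) := by exact_mod_cast h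
  nlinarith [sqrt5_gt_two, psi_sq, psi_neg]

lemma key_eq {k j : ℕ} (a : Fin k → ℕ) (b : Fin j → ℕ)
    (ha : IsBin a) (hb : IsBin b) (h : Nw a = Nw b) : Xw a = Xw b := by
  obtain ⟨ha1, ha2⟩ := Yw_bounds a ha
  obtain ⟨hb1, hb2⟩ := Yw_bounds b hb
  have hya := Yw_eq a
  have hyb := Yw_eq b
  have hM : Mw a = Mw b := by
    by_contra hne
    rcases Nat.lt_or_ge (Mw a) (Mw b) with hlt | hge
    · have : (Mw a : ℝ) + 1 ≤ (Mw b : ℝ) := by exact_mod_cast hlt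
      rw [h] at hya
      nlinarith [psi_sq, psi_neg]
    · have hlt : Mw b < Mw a := lt_of_le_of_ne hge (fun e => hne e.symm)
      have : (Mw b : ℝ) + 1 ≤ (Mw a : ℝ) := by exact_mod_cast hlt
      rw [h] at hya
      nlinarith [psi_sq, psi_neg]
  rw [Xw_eq, Xw_eq, h, hM]

/-- for binary words a, b, N(a) < N(b) iff X(a) < X(b). -/
theorem stmt_2 {k j : ℕ} (a : Fin k → ℕ) (b : Fin j → ℕ)
    (ha : IsBin a) (hb : IsBin b) :
    Nw a < Nw b ↔ Xw a < Xw b := by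
  constructor
  · exact key_lt a b ha hb
  · intro hx
    rcases lt_trichotomy (Nw a) (Nw b) with h | h | h
    · exact h
    · exact absurd hx (by rw [key_eq a b ha hb h]; exact lt_irrefl _)
    · exact absurd hx (not_lt.mpr (le_of_lt (key_lt b a hb ha h)))

end
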